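/- arXiv:0902.2750 — 2 statements merged into one kernel-verified Lean document; each statement's English description precedes it below -/
import Mathlib

section
/- Monotonicity inequality for the p-Laplacian vector field (Appendix A3 Lemma). Let n ≥ 1 and 1 < p ≤ 2, and set c_p = min{1, 2(p−1)}. Then for all vectors a, b ∈ ℝⁿ one has ⟨a − b, |a|^{p−2} a − |b|^{p−2} b⟩ ≥ c_p · |a − b|² / ( |a|^{2−p} + |b|^{2−p} ), where |x|^{p−2} x is interpreted as the zero vector when x = 0, and where for a = b = 0 the right-hand side is interpreted as 0. -/
open MeasureTheory Filter Set
open scoped Topology RealInnerProductSpace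

noncomputable section

abbrev Euc (n : ℕ) := EuclideanSpace ℝ (Fin n)

/-- The spatial gradient of `u (x, t)` with respect to `x`. -/
def sGrad {n : ℕ} (u : Euc n → ℝ → ℝ) (x : Euc n) (t : ℝ) : Euc n :=
  gradient (fun y => u y t) x

/-- The divergence of a vector field on Euclidean space. -/
def vdiv {n : ℕ} (F : Euc n → Euc n) (x : Euc n) : ℝ :=
  ∑ i, fderiv ℝ F x (EuclideanSpace.single i 1) i

/-- The Laplacian of a scalar function. -/
def lap {n : ℕ} (φ : Euc n → ℝ) (x : Euc n) : ℝ :=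
  vdiv (fun y => gradient φ y) x

/-- The `p`-Laplacian flux `|v|^(p-2) • v`; by the `rpow` conventions it vanishes at `v = 0`
when `p ≠ 2` (and also when `p = 2`, trivially). -/
def pFlux {n : ℕ} (p : ℝ) (v : Euc n) : Euc n := (‖v‖ ^ (p - 2)) • v

/-- `θ_r = 1 / (r p + (p - 2) n)`. -/
def thetaR (n : ℕ) (p r : ℝ) : ℝ := 1 / (r * p + (p - 2) * n)

/-- A classical solution of the fast `p`-Laplacian equation `∂ₜ u = div (|∇u|^(p-2) ∇u)`
on the set `Q ⊆ ℝⁿ × ℝ`: `u`, `∇u`, `∂ₜ u` exist and are continuous on `Q`, the flux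
vector field is (spatially) differentiable, and the equation holds pointwise on `Q`. -/
structure IsPLapSol {n : ℕ} (p : ℝ) (u : Euc n → ℝ → ℝ) (Q : Set (Euc n × ℝ)) : Prop where
  contU : ContinuousOn (fun q : Euc n × ℝ => u q.1 q.2) Q
  contGrad : ContinuousOn (fun q : Euc n × ℝ => sGrad u q.1 q.2) Q
  contDt : ContinuousOn (fun q : Euc n × ℝ => deriv (u q.1) q.2) Q
  diffSpace : ∀ q ∈ Q, DifferentiableAt ℝ (fun y => u y q.2) q.1
  diffTime : ∀ q ∈ Q, DifferentiableAt ℝ (u q.1) q.2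
  diffFlux : ∀ q ∈ Q, DifferentiableAt ℝ (fun y => pFlux p (sGrad u y q.2)) q.1
  eqn : ∀ q ∈ Q, deriv (u q.1) q.2 = vdiv (fun y => pFlux p (sGrad u y q.2)) q.1

/-- `u` takes the initial datum `u₀` in `L^r` on `B` as `t → 0⁺`. -/
def TakesInit {n : ℕ} (r : ℝ) (u : Euc n → ℝ → ℝ) (u₀ : Euc n → ℝ) (B : Set (Euc n)) : Prop :=
  Tendsto (fun t => ∫ x in B, |u x t - u₀ x| ^ r) (𝓝[>] (0:ℝ)) (𝓝 0)

section PLapAux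


private lemma pLapAux_sinh_mul_le (q : ℝ) (hq0 : 0 ≤ q) (hq1 : q ≤ 1) (d : ℝ) (hd : 0 ≤ d) :
    Real.sinh (q * d) ≤ q * Real.sinh d := by
  set g : ℝ → ℝ := fun x => q * Real.sinh x - Real.sinh (q * x) with hg
  have hdiff : ∀ x, HasDerivAt g (q * Real.cosh x - q * Real.cosh (q * x)) x := by
    intro x
    exact ((Real.hasDerivAt_sinh x).const_mul q).sub
      (((Real.hasDerivAt_sinh (q*x)).comp x ((hasDerivAt_id x).const_mul q)).congr_deriv (by ring))
  have hmono : MonotoneOn g (Set.Ici (0:ℝ)) := by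
    apply monotoneOn_of_deriv_nonneg (convex_Ici 0)
    · exact ((continuous_const.mul Real.continuous_sinh).sub
        (Real.continuous_sinh.comp (continuous_const.mul continuous_id))).continuousOn
    · intro x hx
      exact ((hdiff x).differentiableAt).differentiableWithinAt
    · intro x hx
      rw [(hdiff x).deriv]
      simp only [interior_Ici, Set.mem_Ioi] at hx
      have : Real.cosh (q*x) ≤ Real.cosh x := by
        rw [Real.cosh_le_cosh]
        rw [abs_of_nonneg (by positivity), abs_of_nonneg hx.le]
        nlinarith
      nlinarith
  have h0 : g 0 ≤ g d := hmono (Set.mem_Ici.2 le_rfl) (Set.mem_Ici.2 hd) hd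
  simp [hg] at h0
  linarith

private lemma pLapAux_exp_sub_exp (m x : ℝ) : Real.exp (m + x) - Real.exp (m - x) = 2 * Real.exp m * Real.sinh x := by
  rw [Real.sinh_eq, Real.exp_add, Real.exp_sub, Real.exp_neg]
  have h := Real.exp_pos x
  field_simp

private lemma pLapAux_core_small (p A B : ℝ) (hp1 : 1 < p) (hp32 : p ≤ 3/2) (hB : 0 < B) (hBA : B ≤ A) :
    A ^ (2-p) * B ^ (p-1) - A ^ (p-1) * B ^ (2-p) ≤ (3 - 2*p) * (A - B) := by
  have hA : 0 < A := lt_of_lt_of_le hB hBA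
  set α := Real.log A with hα
  set β := Real.log B with hβ
  set m := (α + β) / 2 with hm
  set d := (α - β) / 2 with hd
  have hαβ : β ≤ α := Real.log_le_log hB hBA
  have hd0 : 0 ≤ d := by rw [hd]; linarith
  set q : ℝ := 3 - 2*p with hq
  have hq0 : 0 ≤ q := by rw [hq]; linarith
  have hq1 : q ≤ 1 := by rw [hq]; linarith
  have e1 : A ^ (2-p) * B ^ (p-1) = Real.exp (m + q * d) := by
    rw [Real.rpow_def_of_pos hA, Real.rpow_def_of_pos hB, ← Real.exp_add]
    congr 1
    rw [hm, hd, hq]; ring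
  have e2 : A ^ (p-1) * B ^ (2-p) = Real.exp (m - q * d) := by
    rw [Real.rpow_def_of_pos hA, Real.rpow_def_of_pos hB, ← Real.exp_add]
    congr 1
    rw [hm, hd, hq]; ring
  have e3 : A = Real.exp (m + d) := by
    rw [show m + d = α from by rw [hm, hd]; ring, hα, Real.exp_log hA]
  have e4 : B = Real.exp (m - d) := by
    rw [show m - d = β from by rw [hm, hd]; ring, hβ, Real.exp_log hB]
  rw [e1, e2]
  rw [e3, e4]
  rw [pLapAux_exp_sub_exp, pLapAux_exp_sub_exp]
  have hkey := pLapAux_sinh_mul_le q hq0 hq1 d hd0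
  have hexp := Real.exp_pos m
  nlinarith

private lemma pLapAux_rpow_succ {A : ℝ} (hA : 0 < A) (x : ℝ) : A * A ^ x = A ^ (1 + x) := by
  rw [Real.rpow_add hA, Real.rpow_one]

private lemma pLapAux_f3 (p A B c : ℝ) (hp1 : 1 < p) (hp2 : p ≤ 2) (hc : c = min 1 (2*(p-1)))
    (hB : 0 < B) (hBA : B ≤ A) :
    (A-B) * (A^(2-p) * (B * B^(p-2)) - (A * A^(p-2)) * B^(2-p)) ≤ (1-c)*(A-B)^2 := by
  have hA : 0 < A := lt_of_lt_of_le hB hBA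
  have g1 : A * A^(p-2) = A^(p-1) := by rw [pLapAux_rpow_succ hA]; congr 1; ring
  have g3 : B * B^(p-2) = B^(p-1) := by rw [pLapAux_rpow_succ hB]; congr 1; ring
  rw [g1, g3]
  rcases le_or_gt p (3/2) with hple | hpgt
  · -- c = 2*(p-1), 1 - c = 3 - 2p
    have hc' : c = 2*(p-1) := by rw [hc]; exact min_eq_right (by linarith)
    have hcore := pLapAux_core_small p A B hp1 hple hB hBA
    have hAB : 0 ≤ A - B := by linarith
    calc (A-B) * (A^(2-p)*B^(p-1) - A^(p-1)*B^(2-p))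
        ≤ (A-B) * ((3-2*p)*(A-B)) := by
          exact mul_le_mul_of_nonneg_left hcore hAB
      _ = (1-c)*(A-B)^2 := by rw [hc']; ring
  · -- c = 1
    have hc' : c = 1 := by rw [hc]; exact min_eq_left (by linarith)
    have h1 : B^(2*p-3) ≤ A^(2*p-3) := Real.rpow_le_rpow hB.le hBA (by linarith)
    have h2 : A^(2-p) * B^(p-1) ≤ A^(p-1) * B^(2-p) := by
      have e1 : A^(2-p) * B^(p-1) = (A^(2-p) * B^(2-p)) * B^(2*p-3) := by
        rw [mul_assoc, ← Real.rpow_add hB]; congr 2; ring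
      have e2 : A^(p-1) * B^(2-p) = (A^(2-p) * B^(2-p)) * A^(2*p-3) := by
        rw [show A^(2-p)*B^(2-p)*A^(2*p-3) = (A^(2-p)*A^(2*p-3))*B^(2-p) from by ring,
          ← Real.rpow_add hA]; congr 2; ring
      rw [e1, e2]
      have hpos : 0 ≤ A^(2-p) * B^(2-p) := by positivity
      exact mul_le_mul_of_nonneg_left h1 hpos
    have hAB : 0 ≤ A - B := by linarith
    have : (A-B) * (A^(2-p)*B^(p-1) - A^(p-1)*B^(2-p)) ≤ 0 :=
      mul_nonpos_of_nonneg_of_nonpos hAB (by linarith)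
    rw [hc']
    simpa using this

private lemma pLapAux_key_aux (p : ℝ) (hp1 : 1 < p) (hp2 : p ≤ 2) (A B s : ℝ) (hB : 0 ≤ B) (hBA : B ≤ A)
    (hs : |s| ≤ A*B) :
    min 1 (2*(p-1)) * (A^2 - 2*s + B^2) / (A^(2-p) + B^(2-p))
      ≤ A^(p-2)*A^2 + B^(p-2)*B^2 - s*(A^(p-2)+B^(p-2)) := by
  have hc1 : min 1 (2*(p-1)) ≤ 1 := min_le_left _ _
  have hc0 : 0 < min 1 (2*(p-1)) := lt_min one_pos (by linarith)
  rcases eq_or_lt_of_le hB with hB0 | hB0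
  · -- B = 0
    have hB0' : B = 0 := hB0.symm
    subst hB0'
    have hs0 : s = 0 := by
      have := abs_nonneg s
      have : |s| ≤ 0 := by simpa using hs
      simpa [abs_eq_zero] using le_antisymm this (abs_nonneg s)
    subst hs0
    rcases eq_or_lt_of_le (hB.trans hBA) with hA0 | hA0
    · simp [← hA0]
    · have hD : 0 < A^(2-p) + (0:ℝ)^(2-p) := by
        have h1 : 0 < A^(2-p) := Real.rpow_pos_of_pos hA0 _
        have h2 : (0:ℝ) ≤ (0:ℝ)^(2-p) := Real.rpow_nonneg le_rfl _
        linarith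
      rw [div_le_iff₀ hD]
      have e1 : A^(p-2) * A^(2-p) = 1 := by
        rw [← Real.rpow_add hA0]; norm_num
      have e2 : (0:ℝ) ≤ A^(p-2) * A^2 * (0:ℝ)^(2-p) := by positivity
      have hA2 : (0:ℝ) ≤ A^2 := sq_nonneg A
      have expand : A^(p-2)*A^2 * (A^(2-p) + (0:ℝ)^(2-p))
          = A^2 + A^(p-2)*A^2*(0:ℝ)^(2-p) := by
        have : A^(p-2)*A^2 * A^(2-p) = (A^(p-2)*A^(2-p))*A^2 := by ring
        rw [mul_add, this, e1]; ring
      rw [show min 1 (2*(p-1)) * (A^2 - 2*0 + 0^2) = min 1 (2*(p-1)) * A^2 from by ring]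
      nlinarith [mul_le_mul_of_nonneg_right hc1 hA2]
  · -- 0 < B ≤ A
    have hA0 : 0 < A := lt_of_lt_of_le hB0 hBA
    set c := min 1 (2*(p-1)) with hc
    have hD : 0 < A^(2-p) + B^(2-p) := by positivity
    rw [div_le_iff₀ hD]
    have huu : A^(p-2) * A^(2-p) = 1 := by rw [← Real.rpow_add hA0]; norm_num
    have hvv : B^(p-2) * B^(2-p) = 1 := by rw [← Real.rpow_add hB0]; norm_num
    have hu : 0 < A^(p-2) := Real.rpow_pos_of_pos hA0 _
    have hv : 0 < B^(p-2) := Real.rpow_pos_of_pos hB0 _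
    have hu' : 0 < A^(2-p) := Real.rpow_pos_of_pos hA0 _
    have hv' : 0 < B^(2-p) := Real.rpow_pos_of_pos hB0 _
    -- M ≥ 2
    have hxy : (A^(p-2) * B^(2-p)) * (A^(2-p) * B^(p-2)) = 1 := by
      rw [show (A^(p-2) * B^(2-p)) * (A^(2-p) * B^(p-2))
        = (A^(p-2)*A^(2-p)) * (B^(p-2)*B^(2-p)) from by ring, huu, hvv]; norm_num
    have hx : 0 < A^(p-2) * B^(2-p) := by positivity
    have hM2 : 2 ≤ A^(p-2) * B^(2-p) + A^(2-p) * B^(p-2) := by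
      nlinarith [sq_nonneg (A^(p-2) * B^(2-p) - 1), hx, hxy]
    have hf3 := pLapAux_f3 p A B c hp1 hp2 hc hB0 hBA
    have hs1 : s ≤ A*B := (abs_le.1 hs).2
    have euu : A^(p-2) * A^2 * A^(2-p) = A^2 := by
      rw [show A^(p-2) * A^2 * A^(2-p) = (A^(p-2)*A^(2-p))*A^2 from by ring, huu]; ring
    have evv : B^(p-2) * B^2 * B^(2-p) = B^2 := by
      rw [show B^(p-2) * B^2 * B^(2-p) = (B^(p-2)*B^(2-p))*B^2 from by ring, hvv]; ring
    have t1 : (0:ℝ) ≤ (A*B - s) * (2 - 2*c) := mul_nonneg (by linarith) (by linarith)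
    have t2 : (0:ℝ) ≤ (A*B - s) * (A^(p-2) * B^(2-p) + A^(2-p) * B^(p-2)) :=
      mul_nonneg (by linarith) (by linarith)
    nlinarith [hf3, t1, t2, euu, evv, huu, hvv, hM2]

private lemma pLapAux_key (p : ℝ) (hp1 : 1 < p) (hp2 : p ≤ 2) (A B s : ℝ) (hA : 0 ≤ A) (hB : 0 ≤ B)
    (hs : |s| ≤ A*B) :
    min 1 (2*(p-1)) * (A^2 - 2*s + B^2) / (A^(2-p) + B^(2-p))
      ≤ A^(p-2)*A^2 + B^(p-2)*B^2 - s*(A^(p-2)+B^(p-2)) := by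
  rcases le_total B A with h | h
  · exact pLapAux_key_aux p hp1 hp2 A B s hB h hs
  · have h' := pLapAux_key_aux p hp1 hp2 B A s hA h (by rwa [mul_comm])
    calc min 1 (2*(p-1)) * (A^2 - 2*s + B^2) / (A^(2-p) + B^(2-p))
        = min 1 (2*(p-1)) * (B^2 - 2*s + A^2) / (B^(2-p) + A^(2-p)) := by ring_nf
      _ ≤ B^(p-2)*B^2 + A^(p-2)*A^2 - s*(B^(p-2)+A^(p-2)) := h'
      _ = A^(p-2)*A^2 + B^(p-2)*B^2 - s*(A^(p-2)+B^(p-2)) := by ring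


end PLapAux

/-- Appendix A3: monotonicity inequality for the `p`-Laplacian vector field. -/
theorem pLaplacian_monotonicity
    (n : ℕ) (hn : 1 ≤ n) (p : ℝ) (hp1 : 1 < p) (hp2 : p ≤ 2)
    (a b : Euc n) :
    min 1 (2 * (p - 1)) * ‖a - b‖ ^ 2 / (‖a‖ ^ (2 - p) + ‖b‖ ^ (2 - p))
      ≤ ⟪a - b, (‖a‖ ^ (p - 2)) • a - (‖b‖ ^ (p - 2)) • b⟫ := by
  have hs := abs_real_inner_le_norm a b
  have hkey := pLapAux_key p hp1 hp2 (‖a‖) (‖b‖) ⟪a, b⟫ (norm_nonneg a) (norm_nonneg b) hs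
  have hinner : ⟪a - b, (‖a‖ ^ (p - 2)) • a - (‖b‖ ^ (p - 2)) • b⟫
      = ‖a‖^(p-2)*‖a‖^2 + ‖b‖^(p-2)*‖b‖^2 - ⟪a,b⟫*(‖a‖^(p-2)+‖b‖^(p-2)) := by
    rw [inner_sub_right, real_inner_smul_right, real_inner_smul_right,
      inner_sub_left, inner_sub_left, real_inner_self_eq_norm_sq,
      real_inner_self_eq_norm_sq, real_inner_comm b a]
    ring
  have hnorm : ‖a - b‖^2 = ‖a‖^2 - 2*⟪a,b⟫ + ‖b‖^2 := norm_sub_sq_real a b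
  rw [hinner, hnorm]
  exact hkey
end
end

section
/- Existence of cutoff functions with controlled gradient and Laplacian integrals (Appendix A1, Lemma choice.varphi). For every dimension n ≥ 1 and all reals α > 0 and β > 0 there exist constants C₁ > 0 (depending only on n and α) and C₂ > 0 (depending only on n and β) such that: for every x₀ ∈ ℝⁿ and all radii 0 < R < R₀ there exists a smooth, compactly supported function φ : ℝⁿ → ℝ with 0 ≤ φ ≤ 1, φ ≡ 1 on the closed ball cl(B_R(x₀)), φ ≡ 0 outside B_{R₀}(x₀), satisfying both ∫_{ℝⁿ} |∇φ(x)|^α φ(x)^{1−α} dx ≤ C₁ |B_{R₀}∖B_R| (R₀−R)^{−α} and ∫_{ℝⁿ} |Δφ(x)|^β φ(x)^{1−β} dx ≤ C₂ |B_{R₀}∖B_R| (R₀−R)^{−2β}, where the integrands are interpreted as 0 at points where φ = 0. -/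
open MeasureTheory Filter Set
open scoped Topology RealInnerProductSpace

noncomputable section

section CutoffAux

open Real

private lemma st_deriv_lo {s : ℝ} (h : s < 0) : deriv Real.smoothTransition s = 0 := by
  have he : Real.smoothTransition =ᶠ[𝓝 s] fun _ => (0:ℝ) := by
    filter_upwards [Iio_mem_nhds h] with t ht
    exact Real.smoothTransition.zero_of_nonpos (le_of_lt ht)
  rw [he.deriv_eq]; exact deriv_const _ _

private lemma st_deriv_hi {s : ℝ} (h : 1 < s) : deriv Real.smoothTransition s = 0 := by
  have he : Real.smoothTransition =ᶠ[𝓝 s] fun _ => (1:ℝ) := by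
    filter_upwards [Ioi_mem_nhds h] with t ht
    exact Real.smoothTransition.one_of_one_le (le_of_lt ht)
  rw [he.deriv_eq]; exact deriv_const _ _

private lemma st_deriv2_lo {s : ℝ} (h : s < 0) : deriv (deriv Real.smoothTransition) s = 0 := by
  have he : deriv Real.smoothTransition =ᶠ[𝓝 s] fun _ => (0:ℝ) := by
    filter_upwards [Iio_mem_nhds h] with t ht
    exact st_deriv_lo ht
  rw [he.deriv_eq]; exact deriv_const _ _

private lemma st_deriv2_hi {s : ℝ} (h : 1 < s) : deriv (deriv Real.smoothTransition) s = 0 := by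
  have he : deriv Real.smoothTransition =ᶠ[𝓝 s] fun _ => (0:ℝ) := by
    filter_upwards [Ioi_mem_nhds h] with t ht
    exact st_deriv_hi ht
  rw [he.deriv_eq]; exact deriv_const _ _

private lemma bound_exists {ψ : ℝ → ℝ} (hc : Continuous ψ) (h0 : ∀ s, s < 0 → ψ s = 0)
    (h1 : ∀ s, 1 < s → ψ s = 0) : ∃ M : ℝ, 0 ≤ M ∧ ∀ s, |ψ s| ≤ M := by
  obtain ⟨C, hC⟩ := (isCompact_Icc (a := (0:ℝ)) (b := 1)).exists_bound_of_continuousOn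
    hc.continuousOn
  refine ⟨max C 0, le_max_right _ _, fun s => ?_⟩
  rcases le_or_gt s 1 with h | h
  · rcases le_or_gt 0 s with h' | h'
    · exact le_trans (by simpa using hC s ⟨h', h⟩) (le_max_left _ _)
    · rw [h0 s h']; simp
  · rw [h1 s h]; simp

private lemma sum_fderiv_eq {n : ℕ} (v : Euc n) (a b : ℝ) :
    (∑ i, ((a • ContinuousLinearMap.id ℝ (Euc n) +
      (b • ((2:ℝ) • innerSL ℝ v)).smulRight v) (EuclideanSpace.single i 1)) i)
      = n * a + 2 * b * ‖v‖^2 := by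
  have hnorm : ∑ i, v i * v i = ‖v‖^2 := by
    rw [EuclideanSpace.norm_eq, Real.sq_sqrt (Finset.sum_nonneg (fun i _ => sq_nonneg _))]
    simp [Real.norm_eq_abs, sq_abs, sq]
  simp only [ContinuousLinearMap.add_apply, ContinuousLinearMap.smul_apply,
    ContinuousLinearMap.id_apply, ContinuousLinearMap.smulRight_apply,
    innerSL_apply_apply, PiLp.add_apply, PiLp.smul_apply, smul_eq_mul]
  have key : ∀ i : Fin n, a * (EuclideanSpace.single i (1:ℝ)) i
      + b * (2 * (inner ℝ v (EuclideanSpace.single i (1:ℝ)))) * v i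
      = a + 2 * b * (v i * v i) := by
    intro i
    rw [EuclideanSpace.single_apply, EuclideanSpace.inner_single_right]
    simp; ring
  rw [Finset.sum_congr rfl fun i _ => key i, Finset.sum_add_distrib, Finset.sum_const,
    ← Finset.mul_sum, hnorm]
  simp [nsmul_eq_mul]

private lemma integral_le_of_le_indicator {n : ℕ} {f : Euc n → ℝ} {A : Set (Euc n)}
    (hA : MeasurableSet A) (hAvol : volume A < ⊤) {c : ℝ}
    (hf0 : ∀ x, 0 ≤ f x) (hfA : ∀ x, f x ≤ A.indicator (fun _ => c) x) :
    ∫ x, f x ≤ c * (volume A).toReal := by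
  have hgi : Integrable (A.indicator (fun _ => c)) (volume : Measure (Euc n)) :=
    (integrable_indicator_iff hA).2 (integrableOn_const hAvol.ne)
  calc ∫ x, f x ≤ ∫ x, A.indicator (fun _ => c) x :=
        integral_mono_of_nonneg (ae_of_all _ hf0) hgi (ae_of_all _ hfA)
    _ = c * (volume A).toReal := by
        rw [integral_indicator_const _ hA, smul_eq_mul, mul_comm, measureReal_def]

private lemma rpow_combine {τ c γ : ℝ} {m k : ℕ} (hτ : 0 < τ) (hτ1 : τ ≤ 1)
    (hc : 0 ≤ c) (hk : k ≤ m) (hkm : (k:ℝ) * γ ≤ (m:ℝ)) (hγ : 0 < γ)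
    {v : ℝ} (hv : 0 ≤ v) (hvle : v ≤ c * τ ^ (m - k)) :
    v ^ γ * (τ ^ m) ^ (1 - γ) ≤ c ^ γ := by
  have hτm : (0:ℝ) < τ ^ (m - k) := pow_pos hτ _
  have h1 : v ^ γ ≤ (c * τ ^ (m - k)) ^ γ := Real.rpow_le_rpow hv hvle hγ.le
  have h2 : (c * τ ^ (m - k)) ^ γ = c ^ γ * (τ ^ (m - k)) ^ γ :=
    Real.mul_rpow hc hτm.le
  have h3 : ((τ : ℝ) ^ (m - k)) ^ γ = τ ^ (((m - k : ℕ) : ℝ) * γ) := by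
    rw [← Real.rpow_natCast τ (m - k), ← Real.rpow_mul hτ.le]
  have h4 : ((τ : ℝ) ^ m) ^ (1 - γ) = τ ^ ((m : ℝ) * (1 - γ)) := by
    rw [← Real.rpow_natCast τ m, ← Real.rpow_mul hτ.le]
  have h5 : (0:ℝ) ≤ (τ ^ m : ℝ) ^ (1 - γ) := Real.rpow_nonneg (pow_nonneg hτ.le m) _
  calc v ^ γ * (τ ^ m) ^ (1 - γ) ≤ (c * τ ^ (m - k)) ^ γ * (τ ^ m) ^ (1 - γ) :=
        mul_le_mul_of_nonneg_right h1 h5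
    _ = c ^ γ * (τ ^ (((m - k : ℕ) : ℝ) * γ) * τ ^ ((m : ℝ) * (1 - γ))) := by
        rw [h2, h3, h4, mul_assoc]
    _ = c ^ γ * τ ^ (((m - k : ℕ) : ℝ) * γ + (m : ℝ) * (1 - γ)) := by
        rw [← Real.rpow_add hτ]
    _ ≤ c ^ γ * 1 := by
        refine mul_le_mul_of_nonneg_left (Real.rpow_le_one hτ.le hτ1 ?_) (Real.rpow_nonneg hc _)
        rw [Nat.cast_sub hk]; nlinarith
    _ = c ^ γ := mul_one _

end CutoffAux

set_option maxHeartbeats 1000000 in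
/-- Appendix A1 (choice.varphi): existence of cutoff functions with controlled gradient
and Laplacian integrals. -/
theorem cutoff_existence
    (n : ℕ) (hn : 1 ≤ n) (α β : ℝ) (hα : 0 < α) (hβ : 0 < β) :
    ∃ C₁ C₂ : ℝ, 0 < C₁ ∧ 0 < C₂ ∧
      ∀ (x₀ : Euc n) (R R₀ : ℝ), 0 < R → R < R₀ →
      ∃ φ : Euc n → ℝ,
        ContDiff ℝ (⊤ : ℕ∞) φ ∧ HasCompactSupport φ ∧
        (∀ x, 0 ≤ φ x) ∧ (∀ x, φ x ≤ 1) ∧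
        (∀ x ∈ Metric.closedBall x₀ R, φ x = 1) ∧
        (∀ x ∉ Metric.ball x₀ R₀, φ x = 0) ∧
        (∫ x : Euc n, (if φ x = 0 then 0 else ‖gradient φ x‖ ^ α * φ x ^ (1 - α)))
          ≤ C₁ * (volume (Metric.ball x₀ R₀ \ Metric.ball x₀ R)).toReal
              * (R₀ - R) ^ (-α) ∧
        (∫ x : Euc n, (if φ x = 0 then 0 else |lap φ x| ^ β * φ x ^ (1 - β)))
          ≤ C₂ * (volume (Metric.ball x₀ R₀ \ Metric.ball x₀ R)).toReal
              * (R₀ - R) ^ (-(2 * β)) := by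
  classical
  have hTcd : ContDiff ℝ (⊤:ℕ∞) Real.smoothTransition := Real.smoothTransition.contDiff
  have hT'cd : ContDiff ℝ (⊤:ℕ∞) (deriv Real.smoothTransition) :=
    (contDiff_infty_iff_deriv.mp hTcd).2
  have hT''cd : ContDiff ℝ (⊤:ℕ∞) (deriv (deriv Real.smoothTransition)) :=
    (contDiff_infty_iff_deriv.mp hT'cd).2
  have hTdiff : Differentiable ℝ Real.smoothTransition := hTcd.differentiable (by norm_num)
  have hT'diff : Differentiable ℝ (deriv Real.smoothTransition) := hT'cd.differentiable (by norm_num)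
  obtain ⟨M₁, hM₁0, hM₁⟩ := bound_exists hT'cd.continuous (fun s hs => st_deriv_lo hs)
    (fun s hs => st_deriv_hi hs)
  obtain ⟨M₂, hM₂0, hM₂⟩ := bound_exists hT''cd.continuous (fun s hs => st_deriv2_lo hs)
    (fun s hs => st_deriv2_hi hs)
  set m : ℕ := ⌈α⌉₊ + ⌈2*β⌉₊ + 2 with hmdef
  have hm2 : 2 ≤ m := by omega
  have hmα : α ≤ (m:ℝ) := le_trans (Nat.le_ceil α) (Nat.cast_le.mpr (by omega))
  have hmβ : 2*β ≤ (m:ℝ) := le_trans (Nat.le_ceil _) (Nat.cast_le.mpr (by omega))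
  have hmpos : (0:ℝ) < m := by exact_mod_cast (by omega : 0 < m)
  set K₁ : ℝ := 4*(m:ℝ)*(M₁+1) with hK₁def
  set K₂ : ℝ := 16*((m:ℝ)^2*M₁^2 + (m:ℝ)*M₂) + 8*(n:ℝ)*(m:ℝ)*M₁ + 1 with hK₂def
  have hK₁pos : 0 < K₁ := by
    rw [hK₁def]; exact mul_pos (mul_pos four_pos hmpos) (by linarith)
  have hK₂pos : 0 < K₂ := by
    rw [hK₂def]
    have h1 : 0 ≤ (m:ℝ)^2*M₁^2 := by positivity
    have h2 : 0 ≤ (m:ℝ)*M₂ := by positivity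
    have h3 : 0 ≤ 8*(n:ℝ)*(m:ℝ)*M₁ := by positivity
    linarith
  refine ⟨K₁ ^ α, K₂ ^ β, Real.rpow_pos_of_pos hK₁pos α, Real.rpow_pos_of_pos hK₂pos β, ?_⟩
  intro x₀ R R₀ hR hRR₀
  have hR₀ : 0 < R₀ := hR.trans hRR₀
  set R' : ℝ := max R (R₀/2) with hR'def
  have hRR' : R ≤ R' := le_max_left _ _
  have hR'pos : 0 < R' := lt_of_lt_of_le hR hRR'
  have hR'lt : R' < R₀ := max_lt hRR₀ (by linarith)
  set W : ℝ := R₀^2 - R'^2 with hWdef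
  have hWpos : 0 < W := by
    rw [hWdef]
    have := pow_lt_pow_left₀ hR'lt hR'pos.le two_ne_zero
    linarith
  set d : ℝ := R₀ - R with hddef
  have hdpos : 0 < d := by rw [hddef]; linarith
  have hgap : d/2 ≤ R₀ - R' := by
    have h1 : R' ≤ (R₀ + R)/2 := max_le (by linarith) (by linarith)
    rw [hddef]; linarith
  have he1 : d * R₀ ≤ (2*(R₀ - R')) * R₀ := mul_le_mul_of_nonneg_right (by linarith) hR₀.le
  have he2 : (2*(R₀ - R')) * R₀ ≤ (2*(R₀ - R')) * (R₀ + R') :=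
    mul_le_mul_of_nonneg_left (by linarith) (by linarith)
  have he3 : (2*(R₀ - R')) * (R₀ + R') = 2*(R₀^2 - R'^2) := by ring
  have hWd : d * R₀ ≤ 2 * W := by rw [hWdef]; linarith
  have hWd2 : d^2 ≤ 4 * W := by
    have hdR₀ : d ≤ R₀ := by rw [hddef]; linarith
    have h4 : d * d ≤ (2*(R₀ - R')) * R₀ :=
      mul_le_mul (by linarith) hdR₀ hdpos.le (by linarith)
    rw [hWdef]; nlinarith [hWpos]
  -- basic objects
  set ℓ : ℝ → ℝ := fun t => (R₀^2 - t)/W with hℓdef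
  set g1 : ℝ → ℝ := fun t => (m:ℝ) * Real.smoothTransition (ℓ t) ^ (m-1)
      * deriv Real.smoothTransition (ℓ t) * (-1 / W) with hg1def
  set P' : ℝ → ℝ := fun s => (m:ℝ) * (((m-1:ℕ):ℝ) * Real.smoothTransition s ^ (m-1-1)
        * deriv Real.smoothTransition s) * deriv Real.smoothTransition s
      + (m:ℝ) * Real.smoothTransition s ^ (m-1) * deriv (deriv Real.smoothTransition) s
    with hP'def
  set g2 : ℝ → ℝ := fun t => P' (ℓ t) * (-1 / W) * (-1 / W) with hg2def
  set G : ℝ → ℝ := fun t => Real.smoothTransition (ℓ t) ^ m with hGdef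
  set u : Euc n → ℝ := fun x => ‖x - x₀‖^2 with hudef
  set φ : Euc n → ℝ := fun x => G (u x) with hφdef
  have hφτ : ∀ x, φ x = Real.smoothTransition (ℓ (u x)) ^ m := by
    intro x; rw [hφdef, hGdef]
  -- derivative chains
  have hℓAt : ∀ t, HasDerivAt ℓ (-1 / W) t := by
    intro t
    rw [hℓdef]
    exact ((hasDerivAt_id t).const_sub (R₀^2)).div_const W
  have hGAt : ∀ t, HasDerivAt G (g1 t) t := by
    intro t
    rw [hGdef]; simp only [hg1def]
    have h1 : HasDerivAt (fun s => Real.smoothTransition s ^ m)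
        ((m:ℝ) * Real.smoothTransition (ℓ t) ^ (m-1)
          * deriv Real.smoothTransition (ℓ t)) (ℓ t) :=
      (hasDerivAt_pow m _).comp (ℓ t) ((hTdiff (ℓ t)).hasDerivAt)
    exact h1.comp t (hℓAt t)
  have hg1At : ∀ t, HasDerivAt g1 (g2 t) t := by
    intro t
    simp only [hg1def, hg2def]
    have hF : ∀ s, HasDerivAt (fun s => (m:ℝ) * Real.smoothTransition s ^ (m-1)
        * deriv Real.smoothTransition s) (P' s) s := by
      intro s
      simp only [hP'def]
      have hpow : HasDerivAt (fun s => Real.smoothTransition s ^ (m-1))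
          (((m-1:ℕ):ℝ) * Real.smoothTransition s ^ (m-1-1)
            * deriv Real.smoothTransition s) s :=
        (hasDerivAt_pow (m-1) _).comp s ((hTdiff s).hasDerivAt)
      exact (hpow.const_mul ((m:ℝ))).mul ((hT'diff s).hasDerivAt)
    exact ((hF (ℓ t)).comp t (hℓAt t)).mul_const (-1 / W)
  -- fderiv of u
  have huAt : ∀ x : Euc n, HasFDerivAt u ((2:ℝ) • (innerSL ℝ (x - x₀))) x := by
    intro x
    rw [hudef]
    have hf : HasFDerivAt (fun y : Euc n => y - x₀) (ContinuousLinearMap.id ℝ (Euc n)) x :=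
      (hasFDerivAt_id x).sub_const x₀
    have h2 := hf.norm_sq
    exact h2.congr_fderiv (by ext y; simp)
  have hφfd : ∀ x, HasFDerivAt φ (g1 (u x) • ((2:ℝ) • (innerSL ℝ (x - x₀)))) x := by
    intro x
    rw [hφdef]
    exact (hGAt (u x)).comp_hasFDerivAt x (huAt x)
  have hgradAt : ∀ x, HasGradientAt φ ((2 * g1 (u x)) • (x - x₀)) x := by
    intro x
    rw [hasGradientAt_iff_hasFDerivAt]
    refine (hφfd x).congr_fderiv ?_
    ext y
    simp only [InnerProductSpace.toDual_apply_apply, inner_smul_left, ContinuousLinearMap.smul_apply,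
      innerSL_apply_apply, smul_eq_mul, conj_trivial]
    ring
  have hgradeq : ∀ x, gradient φ x = (2 * g1 (u x)) • (x - x₀) := fun x => (hgradAt x).gradient
  -- laplacian formula
  have hsAt : ∀ x : Euc n, HasFDerivAt (fun y => 2 * g1 (u y))
      ((2 * g2 (u x)) • ((2:ℝ) • (innerSL ℝ (x - x₀)))) x := by
    intro x
    exact (HasDerivAt.const_mul (2:ℝ) (hg1At (u x))).comp_hasFDerivAt x (huAt x)
  have hlapeq : ∀ x, lap φ x = (n:ℝ) * (2 * g1 (u x)) + 2 * (2 * g2 (u x)) * u x := by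
    intro x
    have hfd : HasFDerivAt (fun y => gradient φ y)
        ((2 * g1 (u x)) • ContinuousLinearMap.id ℝ (Euc n)
          + ((2 * g2 (u x)) • ((2:ℝ) • (innerSL ℝ (x - x₀)))).smulRight (x - x₀)) x := by
      have h := (hsAt x).smul ((hasFDerivAt_id x).sub_const x₀)
      simp only [id_eq] at h
      have hfun : ((fun y => 2 * g1 (u y)) • fun y : Euc n => y - x₀) = fun y => gradient φ y := by
        funext y; rw [hgradeq y]; rfl
      rwa [hfun] at h
    unfold lap vdiv
    rw [hfd.fderiv, sum_fderiv_eq (x - x₀) (2 * g1 (u x)) (2 * g2 (u x))]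
  -- basic properties of φ
  have hτ0 : ∀ s : ℝ, 0 ≤ Real.smoothTransition s := Real.smoothTransition.nonneg
  have hτ1 : ∀ s : ℝ, Real.smoothTransition s ≤ 1 := Real.smoothTransition.le_one
  have hφ0 : ∀ x, 0 ≤ φ x := fun x => by rw [hφτ x]; exact pow_nonneg (hτ0 _) m
  have hφ1 : ∀ x, φ x ≤ 1 := fun x => by rw [hφτ x]; exact pow_le_one₀ (hτ0 _) (hτ1 _)
  have hu_eq : ∀ x : Euc n, u x = ‖x - x₀‖^2 := fun x => by rw [hudef]
  have hone : ∀ x ∈ Metric.closedBall x₀ R, φ x = 1 := by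
    intro x hx
    have hdist : ‖x - x₀‖ ≤ R := by
      rw [← dist_eq_norm]; exact Metric.mem_closedBall.mp hx
    have hux : u x ≤ R'^2 := by
      rw [hu_eq]
      have h1 : ‖x - x₀‖^2 ≤ R^2 := pow_le_pow_left₀ (norm_nonneg _) hdist 2
      have h2 : R^2 ≤ R'^2 := pow_le_pow_left₀ hR.le hRR' 2
      linarith
    have hℓ1 : 1 ≤ ℓ (u x) := by
      simp only [hℓdef]
      rw [le_div_iff₀ hWpos, hWdef]
      linarith
    rw [hφτ x, Real.smoothTransition.one_of_one_le hℓ1, one_pow]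
  have hzero : ∀ x ∉ Metric.ball x₀ R₀, φ x = 0 := by
    intro x hx
    have hdist : R₀ ≤ ‖x - x₀‖ := by
      rw [← dist_eq_norm]; exact le_of_not_gt (fun h => hx (Metric.mem_ball.mpr h))
    have hux : R₀^2 ≤ u x := by
      rw [hu_eq]; exact pow_le_pow_left₀ hR₀.le hdist 2
    have hℓ0 : ℓ (u x) ≤ 0 := by
      simp only [hℓdef]
      exact div_nonpos_of_nonpos_of_nonneg (by linarith) hWpos.le
    rw [hφτ x, Real.smoothTransition.zero_of_nonpos hℓ0, zero_pow (by omega : m ≠ 0)]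
  have hcd : ContDiff ℝ (⊤:ℕ∞) φ := by
    have hucd : ContDiff ℝ (⊤:ℕ∞) u := by
      rw [hudef]
      exact ContDiff.norm_sq (𝕜 := ℝ) (contDiff_id.sub contDiff_const)
    have hℓcd : ContDiff ℝ (⊤:ℕ∞) ℓ := by
      rw [hℓdef]
      exact (contDiff_const.sub contDiff_id).div_const W
    have hGcd : ContDiff ℝ (⊤:ℕ∞) G := by
      rw [hGdef]
      exact (hTcd.comp hℓcd).pow m
    rw [hφdef]
    exact hGcd.comp hucd
  have hsupp : HasCompactSupport φ :=
    HasCompactSupport.intro (isCompact_closedBall x₀ R₀)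
      (fun x hx => hzero x (fun hb => hx (Metric.ball_subset_closedBall hb)))
  -- pointwise bounds
  have hWinv : (0:ℝ) ≤ W⁻¹ := inv_nonneg.mpr hWpos.le
  have hg1bound : ∀ t : ℝ, |g1 t| ≤ (m:ℝ) * M₁ * W⁻¹
      * Real.smoothTransition (ℓ t) ^ (m-1) := by
    intro t
    simp only [hg1def]
    rw [abs_mul, abs_mul, abs_mul]
    have e1 : |((m:ℕ):ℝ)| = (m:ℝ) := abs_of_nonneg (Nat.cast_nonneg m)
    have e2 : |Real.smoothTransition (ℓ t) ^ (m-1)| = Real.smoothTransition (ℓ t) ^ (m-1) :=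
      abs_of_nonneg (pow_nonneg (hτ0 _) _)
    have e3 : |(-1 / W)| = W⁻¹ := by
      rw [abs_div, abs_neg, abs_one, abs_of_pos hWpos, one_div]
    rw [e1, e2, e3]
    have hnn : 0 ≤ (m:ℝ) * Real.smoothTransition (ℓ t) ^ (m-1) :=
      mul_nonneg (Nat.cast_nonneg m) (pow_nonneg (hτ0 _) _)
    calc (m:ℝ) * Real.smoothTransition (ℓ t) ^ (m-1)
          * |deriv Real.smoothTransition (ℓ t)| * W⁻¹
        ≤ (m:ℝ) * Real.smoothTransition (ℓ t) ^ (m-1) * M₁ * W⁻¹ :=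
          mul_le_mul_of_nonneg_right (mul_le_mul_of_nonneg_left (hM₁ (ℓ t)) hnn) hWinv
      _ = (m:ℝ) * M₁ * W⁻¹ * Real.smoothTransition (ℓ t) ^ (m-1) := by ring
  have hgradbound : ∀ x : Euc n, u x ≤ R₀^2 →
      ‖gradient φ x‖ ≤ (K₁ / d) * Real.smoothTransition (ℓ (u x)) ^ (m-1) := by
    intro x hux
    have hr0 : (0:ℝ) ≤ ‖x - x₀‖ := norm_nonneg _
    have hrle : ‖x - x₀‖ ≤ R₀ := by
      have h1 : ‖x - x₀‖^2 ≤ R₀^2 := by rw [← hu_eq]; exact hux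
      exact le_of_pow_le_pow_left₀ two_ne_zero hR₀.le h1
    rw [hgradeq x, norm_smul, Real.norm_eq_abs]
    have hRW : R₀ / W ≤ 2 / d := (div_le_div_iff₀ hWpos hdpos).mpr (by linarith)
    have hτn : 0 ≤ Real.smoothTransition (ℓ (u x)) ^ (m-1) := pow_nonneg (hτ0 _) _
    calc |2 * g1 (u x)| * ‖x - x₀‖
        ≤ (2 * ((m:ℝ) * M₁ * W⁻¹ * Real.smoothTransition (ℓ (u x)) ^ (m-1))) * R₀ := by
          refine mul_le_mul ?_ hrle hr0 ?_
          · rw [abs_mul, abs_two]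
            exact mul_le_mul_of_nonneg_left (hg1bound (u x)) (by norm_num)
          · have : 0 ≤ (m:ℝ) * M₁ * W⁻¹ := by positivity
            positivity
      _ = (2*(m:ℝ)*M₁*(R₀ * W⁻¹)) * Real.smoothTransition (ℓ (u x)) ^ (m-1) := by ring
      _ ≤ (K₁ / d) * Real.smoothTransition (ℓ (u x)) ^ (m-1) := by
          refine mul_le_mul_of_nonneg_right ?_ hτn
          rw [← div_eq_mul_inv]
          have h5 : 2*(m:ℝ)*M₁*(R₀/W) ≤ 2*(m:ℝ)*M₁*(2/d) :=
            mul_le_mul_of_nonneg_left hRW (by positivity)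
          have h6 : 2*(m:ℝ)*M₁*(2/d) ≤ K₁ / d := by
            rw [show 2*(m:ℝ)*M₁*(2/d) = (4*(m:ℝ)*M₁)/d from by ring, hK₁def,
              div_le_div_iff₀ hdpos hdpos]
            nlinarith [hmpos, hM₁0, hdpos]
          linarith
  -- laplacian pointwise bound
  have hτpow : ∀ s : ℝ, Real.smoothTransition s ^ (m-1) ≤ Real.smoothTransition s ^ (m-2) :=
    fun s => pow_le_pow_of_le_one (hτ0 s) (hτ1 s) (by omega)
  have hP'bound : ∀ s : ℝ, |P' s| ≤ ((m:ℝ)^2*M₁^2 + (m:ℝ)*M₂)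
      * Real.smoothTransition s ^ (m-2) := by
    intro s
    simp only [hP'def]
    have e2 : m - 1 - 1 = m - 2 := by omega
    rw [e2]
    have hτ2nn : 0 ≤ Real.smoothTransition s ^ (m-2) := pow_nonneg (hτ0 _) _
    have hm1c : |((m-1:ℕ):ℝ)| ≤ (m:ℝ) := by
      rw [abs_of_nonneg (Nat.cast_nonneg _)]; exact_mod_cast Nat.sub_le m 1
    refine le_trans (abs_add_le _ _) ?_
    have hb1 : |(m:ℝ) * (((m-1:ℕ):ℝ) * Real.smoothTransition s ^ (m-2)
        * deriv Real.smoothTransition s) * deriv Real.smoothTransition s|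
        ≤ (m:ℝ) * ((m:ℝ) * Real.smoothTransition s ^ (m-2) * M₁) * M₁ := by
      rw [abs_mul, abs_mul, abs_mul, abs_mul, abs_of_nonneg (Nat.cast_nonneg m),
        abs_of_nonneg hτ2nn]
      have key : |((m-1:ℕ):ℝ)| * Real.smoothTransition s ^ (m-2)
          * |deriv Real.smoothTransition s|
          ≤ (m:ℝ) * Real.smoothTransition s ^ (m-2) * M₁ :=
        mul_le_mul (mul_le_mul_of_nonneg_right hm1c hτ2nn) (hM₁ s) (abs_nonneg _)
          (mul_nonneg (Nat.cast_nonneg m) hτ2nn)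
      exact mul_le_mul (mul_le_mul_of_nonneg_left key (Nat.cast_nonneg m)) (hM₁ s)
        (abs_nonneg _) (mul_nonneg (Nat.cast_nonneg m)
          (mul_nonneg (mul_nonneg (Nat.cast_nonneg m) hτ2nn) hM₁0))
    have hb2 : |(m:ℝ) * Real.smoothTransition s ^ (m-1) * deriv (deriv Real.smoothTransition) s|
        ≤ (m:ℝ) * Real.smoothTransition s ^ (m-2) * M₂ := by
      rw [abs_mul, abs_mul, abs_of_nonneg (Nat.cast_nonneg m),
        abs_of_nonneg (pow_nonneg (hτ0 _) _)]
      exact mul_le_mul (mul_le_mul_of_nonneg_left (hτpow s) (Nat.cast_nonneg m)) (hM₂ s)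
        (abs_nonneg _) (mul_nonneg (Nat.cast_nonneg m) hτ2nn)
    calc |(m:ℝ) * (((m-1:ℕ):ℝ) * Real.smoothTransition s ^ (m-2)
          * deriv Real.smoothTransition s) * deriv Real.smoothTransition s|
        + |(m:ℝ) * Real.smoothTransition s ^ (m-1) * deriv (deriv Real.smoothTransition) s|
        ≤ (m:ℝ) * ((m:ℝ) * Real.smoothTransition s ^ (m-2) * M₁) * M₁
          + (m:ℝ) * Real.smoothTransition s ^ (m-2) * M₂ := add_le_add hb1 hb2
      _ = ((m:ℝ)^2*M₁^2 + (m:ℝ)*M₂) * Real.smoothTransition s ^ (m-2) := by ring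
  have hg2bound : ∀ t : ℝ, |g2 t| ≤ ((m:ℝ)^2*M₁^2 + (m:ℝ)*M₂) * (W⁻¹ * W⁻¹)
      * Real.smoothTransition (ℓ t) ^ (m-2) := by
    intro t
    simp only [hg2def]
    have e3 : |(-1 / W)| = W⁻¹ := by
      rw [abs_div, abs_neg, abs_one, abs_of_pos hWpos, one_div]
    rw [abs_mul, abs_mul, e3]
    calc |P' (ℓ t)| * W⁻¹ * W⁻¹
        ≤ (((m:ℝ)^2*M₁^2 + (m:ℝ)*M₂) * Real.smoothTransition (ℓ t) ^ (m-2)) * W⁻¹ * W⁻¹ :=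
          mul_le_mul_of_nonneg_right (mul_le_mul_of_nonneg_right (hP'bound (ℓ t)) hWinv) hWinv
      _ = ((m:ℝ)^2*M₁^2 + (m:ℝ)*M₂) * (W⁻¹ * W⁻¹) * Real.smoothTransition (ℓ t) ^ (m-2) := by
          ring
  have hWd2sq : d^2 * R₀^2 ≤ 4 * W^2 := by
    have h := mul_self_le_mul_self (mul_nonneg hdpos.le hR₀.le) hWd
    nlinarith [h]
  have hW3 : W⁻¹ ≤ 4 / d^2 := by
    rw [inv_eq_one_div]
    exact (div_le_div_iff₀ hWpos (pow_pos hdpos 2)).mpr (by linarith)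
  have hlapbound : ∀ x : Euc n, u x ≤ R₀^2 →
      |lap φ x| ≤ (K₂ / d^2) * Real.smoothTransition (ℓ (u x)) ^ (m-2) := by
    intro x hux
    have hux0 : 0 ≤ u x := by rw [hu_eq]; positivity
    have hτ2nn : 0 ≤ Real.smoothTransition (ℓ (u x)) ^ (m-2) := pow_nonneg (hτ0 _) _
    have hW4 : u x * (W⁻¹ * W⁻¹) ≤ 4 / d^2 := by
      have h1 : u x * (W⁻¹ * W⁻¹) ≤ R₀^2 * (W⁻¹ * W⁻¹) :=
        mul_le_mul_of_nonneg_right hux (mul_nonneg hWinv hWinv)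
      have h2 : R₀^2 * (W⁻¹ * W⁻¹) ≤ 4 / d^2 := by
        rw [show W⁻¹ * W⁻¹ = (W^2)⁻¹ from by rw [← mul_inv]; ring_nf,
          ← div_eq_mul_inv]
        exact (div_le_div_iff₀ (pow_pos hWpos 2) (pow_pos hdpos 2)).mpr (by linarith)
      linarith
    rw [hlapeq x]
    refine le_trans (abs_add_le _ _) ?_
    have hterm1 : |(n:ℝ) * (2 * g1 (u x))| ≤ 2*(n:ℝ)*(m:ℝ)*M₁ * W⁻¹
        * Real.smoothTransition (ℓ (u x)) ^ (m-2) := by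
      rw [abs_mul, abs_mul, abs_of_nonneg (Nat.cast_nonneg n), abs_two]
      calc (n:ℝ) * (2 * |g1 (u x)|)
          ≤ (n:ℝ) * (2 * ((m:ℝ) * M₁ * W⁻¹ * Real.smoothTransition (ℓ (u x)) ^ (m-1))) := by
            refine mul_le_mul_of_nonneg_left ?_ (Nat.cast_nonneg n)
            exact mul_le_mul_of_nonneg_left (hg1bound (u x)) (by norm_num)
        _ ≤ (n:ℝ) * (2 * ((m:ℝ) * M₁ * W⁻¹ * Real.smoothTransition (ℓ (u x)) ^ (m-2))) := by
            refine mul_le_mul_of_nonneg_left ?_ (Nat.cast_nonneg n)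
            refine mul_le_mul_of_nonneg_left ?_ (by norm_num)
            refine mul_le_mul_of_nonneg_left (hτpow _) ?_
            exact mul_nonneg (mul_nonneg (Nat.cast_nonneg m) hM₁0) hWinv
        _ = 2*(n:ℝ)*(m:ℝ)*M₁ * W⁻¹ * Real.smoothTransition (ℓ (u x)) ^ (m-2) := by ring
    have hterm2 : |2 * (2 * g2 (u x)) * u x| ≤ 4*((m:ℝ)^2*M₁^2 + (m:ℝ)*M₂)
        * (u x * (W⁻¹ * W⁻¹)) * Real.smoothTransition (ℓ (u x)) ^ (m-2) := by
      rw [abs_mul, abs_mul, abs_two, abs_mul, abs_two, abs_of_nonneg hux0]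
      calc 2 * (2 * |g2 (u x)|) * u x
          ≤ 2 * (2 * (((m:ℝ)^2*M₁^2 + (m:ℝ)*M₂) * (W⁻¹ * W⁻¹)
              * Real.smoothTransition (ℓ (u x)) ^ (m-2))) * u x := by
            refine mul_le_mul_of_nonneg_right ?_ hux0
            refine mul_le_mul_of_nonneg_left ?_ (by norm_num)
            exact mul_le_mul_of_nonneg_left (hg2bound (u x)) (by norm_num)
        _ = 4*((m:ℝ)^2*M₁^2 + (m:ℝ)*M₂) * (u x * (W⁻¹ * W⁻¹))
              * Real.smoothTransition (ℓ (u x)) ^ (m-2) := by ring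
    have hN2 : (0:ℝ) ≤ (m:ℝ)^2*M₁^2 + (m:ℝ)*M₂ := by positivity
    have hc1 : 2*(n:ℝ)*(m:ℝ)*M₁ * W⁻¹ ≤ 2*(n:ℝ)*(m:ℝ)*M₁ * (4/d^2) :=
      mul_le_mul_of_nonneg_left hW3 (by positivity)
    have hc2 : 4*((m:ℝ)^2*M₁^2 + (m:ℝ)*M₂) * (u x * (W⁻¹ * W⁻¹))
        ≤ 4*((m:ℝ)^2*M₁^2 + (m:ℝ)*M₂) * (4/d^2) :=
      mul_le_mul_of_nonneg_left hW4 (by positivity)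
    have hsum : 2*(n:ℝ)*(m:ℝ)*M₁ * (4/d^2) + 4*((m:ℝ)^2*M₁^2 + (m:ℝ)*M₂) * (4/d^2)
        ≤ K₂ / d^2 := by
      rw [show 2*(n:ℝ)*(m:ℝ)*M₁ * (4/d^2) + 4*((m:ℝ)^2*M₁^2 + (m:ℝ)*M₂) * (4/d^2)
        = (8*(n:ℝ)*(m:ℝ)*M₁ + 16*((m:ℝ)^2*M₁^2 + (m:ℝ)*M₂))/d^2 from by ring, hK₂def,
        div_le_div_iff₀ (pow_pos hdpos 2) (pow_pos hdpos 2)]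
      nlinarith [pow_pos hdpos 2]
    calc |(n:ℝ) * (2 * g1 (u x))| + |2 * (2 * g2 (u x)) * u x|
        ≤ 2*(n:ℝ)*(m:ℝ)*M₁ * W⁻¹ * Real.smoothTransition (ℓ (u x)) ^ (m-2)
          + 4*((m:ℝ)^2*M₁^2 + (m:ℝ)*M₂) * (u x * (W⁻¹ * W⁻¹))
            * Real.smoothTransition (ℓ (u x)) ^ (m-2) := add_le_add hterm1 hterm2
      _ ≤ 2*(n:ℝ)*(m:ℝ)*M₁ * (4/d^2) * Real.smoothTransition (ℓ (u x)) ^ (m-2)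
          + 4*((m:ℝ)^2*M₁^2 + (m:ℝ)*M₂) * (4/d^2)
            * Real.smoothTransition (ℓ (u x)) ^ (m-2) :=
          add_le_add (mul_le_mul_of_nonneg_right hc1 hτ2nn)
            (mul_le_mul_of_nonneg_right hc2 hτ2nn)
      _ = (2*(n:ℝ)*(m:ℝ)*M₁ * (4/d^2) + 4*((m:ℝ)^2*M₁^2 + (m:ℝ)*M₂) * (4/d^2))
            * Real.smoothTransition (ℓ (u x)) ^ (m-2) := by ring
      _ ≤ (K₂ / d^2) * Real.smoothTransition (ℓ (u x)) ^ (m-2) :=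
          mul_le_mul_of_nonneg_right hsum hτ2nn
  -- combined pointwise rpow bounds
  have hτposof : ∀ x : Euc n, φ x ≠ 0 → 0 < Real.smoothTransition (ℓ (u x)) := by
    intro x hφx
    rcases (hτ0 (ℓ (u x))).lt_or_eq with h | h
    · exact h
    · exact absurd (by rw [hφτ x, ← h, zero_pow (by omega : m ≠ 0)]) hφx
  have hbound1 : ∀ x : Euc n, u x ≤ R₀^2 → φ x ≠ 0 →
      ‖gradient φ x‖ ^ α * φ x ^ (1-α) ≤ (K₁ / d) ^ α := by
    intro x hux hφx
    rw [hφτ x]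
    exact rpow_combine (k := 1) (hτposof x hφx) (hτ1 _) (div_nonneg hK₁pos.le hdpos.le)
      (by omega) (by simpa using hmα) hα (norm_nonneg _) (hgradbound x hux)
  have hbound2 : ∀ x : Euc n, u x ≤ R₀^2 → φ x ≠ 0 →
      |lap φ x| ^ β * φ x ^ (1-β) ≤ (K₂ / d^2) ^ β := by
    intro x hux hφx
    rw [hφτ x]
    exact rpow_combine (k := 2) (hτposof x hφx) (hτ1 _)
      (div_nonneg hK₂pos.le (pow_nonneg hdpos.le 2))
      (by omega) (by exact_mod_cast hmβ) hβ (abs_nonneg _) (hlapbound x hux)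
  -- membership facts
  have huxA : ∀ x : Euc n, x ∈ Metric.ball x₀ R₀ → u x ≤ R₀^2 := by
    intro x hx
    have h1 : ‖x - x₀‖ < R₀ := by rw [← dist_eq_norm]; exact Metric.mem_ball.mp hx
    rw [hu_eq]; nlinarith [norm_nonneg (x - x₀)]
  have hballR : ∀ x : Euc n, x ∈ Metric.ball x₀ R → 1 < ℓ (u x) := by
    intro x hxR
    have hdist : ‖x - x₀‖ < R := by rw [← dist_eq_norm]; exact Metric.mem_ball.mp hxR
    have hux : u x < R'^2 := by
      rw [hu_eq]
      have h1 : ‖x - x₀‖^2 < R^2 := by nlinarith [norm_nonneg (x - x₀)]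
      have h2 : R^2 ≤ R'^2 := pow_le_pow_left₀ hR.le hRR' 2
      linarith
    simp only [hℓdef]
    rw [lt_div_iff₀ hWpos, hWdef]
    linarith
  have hAm : MeasurableSet (Metric.ball x₀ R₀ \ Metric.ball x₀ R) :=
    measurableSet_ball.diff measurableSet_ball
  have hAvol : volume (Metric.ball x₀ R₀ \ Metric.ball x₀ R) < ⊤ :=
    lt_of_le_of_lt (measure_mono Set.diff_subset) measure_ball_lt_top
  refine ⟨φ, hcd, hsupp, hφ0, hφ1, hone, hzero, ?_, ?_⟩
  · -- gradient integral
    have h0 : ∀ x : Euc n, 0 ≤ (if φ x = 0 then 0 else ‖gradient φ x‖ ^ α * φ x ^ (1-α)) := by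
      intro x; split
      · exact le_refl _
      · exact mul_nonneg (Real.rpow_nonneg (norm_nonneg _) _) (Real.rpow_nonneg (hφ0 x) _)
    have hle : ∀ x : Euc n, (if φ x = 0 then 0 else ‖gradient φ x‖ ^ α * φ x ^ (1-α))
        ≤ (Metric.ball x₀ R₀ \ Metric.ball x₀ R).indicator (fun _ => (K₁/d)^α) x := by
      intro x
      by_cases hxA : x ∈ Metric.ball x₀ R₀ \ Metric.ball x₀ R
      · rw [Set.indicator_of_mem hxA]
        by_cases hφx : φ x = 0
        · rw [if_pos hφx]
          exact Real.rpow_nonneg (div_nonneg hK₁pos.le hdpos.le) _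
        · rw [if_neg hφx]
          exact hbound1 x (huxA x hxA.1) hφx
      · rw [Set.indicator_of_notMem hxA]
        by_cases hφx : φ x = 0
        · rw [if_pos hφx]
        · rw [if_neg hφx]
          have hxR : x ∈ Metric.ball x₀ R := by
            by_contra hxR
            have hx0 : x ∈ Metric.ball x₀ R₀ := by
              by_contra h0'; exact hφx (hzero x h0')
            exact hxA ⟨hx0, hxR⟩
          have hg10 : g1 (u x) = 0 := by
            simp only [hg1def]
            rw [st_deriv_hi (hballR x hxR)]; ring
          rw [hgradeq x, hg10, mul_zero, zero_smul, norm_zero,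
            Real.zero_rpow hα.ne', zero_mul]
    have hInt := integral_le_of_le_indicator hAm hAvol h0 hle
    refine le_trans hInt ?_
    have hconv : (K₁/d)^α = K₁^α * d^(-α) := by
      rw [Real.div_rpow hK₁pos.le hdpos.le, Real.rpow_neg hdpos.le, div_eq_mul_inv]
    rw [hconv]
    exact le_of_eq (by ring)
  · -- laplacian integral
    have h0 : ∀ x : Euc n, 0 ≤ (if φ x = 0 then 0 else |lap φ x| ^ β * φ x ^ (1-β)) := by
      intro x; split
      · exact le_refl _
      · exact mul_nonneg (Real.rpow_nonneg (abs_nonneg _) _) (Real.rpow_nonneg (hφ0 x) _)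
    have hle : ∀ x : Euc n, (if φ x = 0 then 0 else |lap φ x| ^ β * φ x ^ (1-β))
        ≤ (Metric.ball x₀ R₀ \ Metric.ball x₀ R).indicator (fun _ => (K₂/d^2)^β) x := by
      intro x
      by_cases hxA : x ∈ Metric.ball x₀ R₀ \ Metric.ball x₀ R
      · rw [Set.indicator_of_mem hxA]
        by_cases hφx : φ x = 0
        · rw [if_pos hφx]
          exact Real.rpow_nonneg (div_nonneg hK₂pos.le (pow_nonneg hdpos.le 2)) _
        · rw [if_neg hφx]
          exact hbound2 x (huxA x hxA.1) hφx
      · rw [Set.indicator_of_notMem hxA]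
        by_cases hφx : φ x = 0
        · rw [if_pos hφx]
        · rw [if_neg hφx]
          have hxR : x ∈ Metric.ball x₀ R := by
            by_contra hxR
            have hx0 : x ∈ Metric.ball x₀ R₀ := by
              by_contra h0'; exact hφx (hzero x h0')
            exact hxA ⟨hx0, hxR⟩
          have hℓgt := hballR x hxR
          have hg10 : g1 (u x) = 0 := by
            simp only [hg1def]
            rw [st_deriv_hi hℓgt]; ring
          have hg20 : g2 (u x) = 0 := by
            simp only [hg2def, hP'def]
            rw [st_deriv_hi hℓgt, st_deriv2_hi hℓgt]; ring
          rw [hlapeq x, hg10, hg20,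
            show ((n:ℝ)*(2*0) + 2*(2*0)*u x) = 0 from by ring, abs_zero,
            Real.zero_rpow hβ.ne', zero_mul]
    have hInt := integral_le_of_le_indicator hAm hAvol h0 hle
    refine le_trans hInt ?_
    have hconv : (K₂/d^2)^β = K₂^β * d^(-(2*β)) := by
      rw [Real.div_rpow hK₂pos.le (pow_nonneg hdpos.le 2)]
      have h2 : ((d^2:ℝ)) ^ β = d ^ (2*β) := by
        rw [← Real.rpow_natCast d 2, ← Real.rpow_mul hdpos.le]
        norm_num
      rw [h2, Real.rpow_neg hdpos.le, div_eq_mul_inv]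
    rw [hconv]
    exact le_of_eq (by ring)
end
end
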